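/- Suppose p = Σ_i α_i [T_i] is a linear combination of brackets of row-standard tableaux of a common row-convex shape D, and p = Σ_j β_j [S_j] where the S_j are distinct straight tableaux of shape D (all β_j nonzero). Then the lexicographically smallest modified column word among the S_j is at least as large as the smallest modified column word among the T_i. -/

import Mathlib

open scoped BigOperators

/-- A cell `(row, column)` of a diagram. -/
abbrev Cell := ℕ × ℕ

/-- A shape is row-convex if its rows have no gaps. -/
def RowConvex (D : Finset Cell) : Prop :=
  ∀ r i j k : ℕ, (r, i) ∈ D → (r, k) ∈ D → i ≤ j → j ≤ k → (r, j) ∈ D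

/-- Rows strictly increase left to right (negative-letter convention). -/
def RowStandard (D : Finset Cell) (T : Cell → ℕ) : Prop :=
  ∀ r i j : ℕ, (r, i) ∈ D → (r, j) ∈ D → i < j → T (r, i) < T (r, j)

/-- A straight tableau (negative-letter case). -/
def Straight (D : Finset Cell) (T : Cell → ℕ) : Prop :=
  RowStandard D T ∧
    ∀ i j k : ℕ, (i, k) ∈ D → (j, k) ∈ D → i < j → T (j, k) < T (i, k) →
      1 ≤ k ∧ (i, k - 1) ∈ D ∧ T (j, k) < T (i, k - 1)

/-- Sorted list of column indices of the cells of `D` in row `r`. -/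
def rowColsList (D : Finset Cell) (r : ℕ) : List ℕ :=
  ((D.filter (fun c => c.1 = r)).val.map Prod.snd).sort (· ≤ ·)

/-- The bracket (determinant of the minor of the generic matrix `(x_{l,p})`)
corresponding to row `r` of the tableau `T`. -/
noncomputable def rowBracket (D : Finset Cell) (T : Cell → ℕ) (r : ℕ) :
    MvPolynomial Cell ℤ :=
  Matrix.det (Matrix.of fun s t : Fin (rowColsList D r).length =>
    MvPolynomial.X (T (r, (rowColsList D r).get s), (rowColsList D r).get t))

/-- `[T]`: the product over the rows of `D` of the row brackets. -/
noncomputable def bracket (D : Finset Cell) (T : Cell → ℕ) : MvPolynomial Cell ℤ :=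
  ∏ r ∈ D.image Prod.fst, rowBracket D T r

/-- Multiset of entries of `T` in column `k` of `D`. -/
def colEntries (D : Finset Cell) (T : Cell → ℕ) (k : ℕ) : Multiset ℕ :=
  (D.filter (fun c => c.2 = k)).val.map T

/-- The modified column word: entries of each column in weakly decreasing
order, columns read left to right. -/
def modColWord (D : Finset Cell) (T : Cell → ℕ) : List ℕ :=
  (List.range (D.sup Prod.snd + 1)).flatMap fun k =>
    ((colEntries D T k).sort (· ≤ ·)).reverse

/-- The column word: entries read bottom to top within each column, columns
left to right. -/
def colWord (D : Finset Cell) (T : Cell → ℕ) : List ℕ :=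
  (List.range (D.sup Prod.snd + 1)).flatMap fun k =>
    (List.range (D.sup Prod.fst + 1)).reverse.filterMap fun i =>
      if (i, k) ∈ D then some (T (i, k)) else none

/-- Strict lexicographic order on words. -/
def lexLt (u v : List ℕ) : Prop := List.Lex (· < ·) u v

/-- Weak lexicographic order on words. -/
def lexLe (u v : List ℕ) : Prop := u = v ∨ List.Lex (· < ·) u v

/-- `varGt v w`: the variable `x_v` is greater than `x_w` in the default
diagonal order: strictly earlier column, or same column and strictly larger
row index (letter). -/
def varGt (v w : Cell) : Prop := v.2 < w.2 ∨ (v.2 = w.2 ∧ w.1 < v.1)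

/-- The default diagonal term order on monomials: `monLt M N` iff the greatest
variable occurring to different powers in `M` and `N` divides `N` to a higher
power. -/
def monLt (M N : Cell →₀ ℕ) : Prop :=
  ∃ v : Cell, M v < N v ∧ ∀ w : Cell, varGt w v → M w = N w

/-- The diagonal monomial of a tableau: the product over the cells `(i, c)` of
`D` of the variables `x_{T(i,c), c}`. -/
noncomputable def diagMon (D : Finset Cell) (T : Cell → ℕ) : Cell →₀ ℕ :=
  ∑ c ∈ D, Finsupp.single (T c, c.2) 1

/-- `m` is the initial (smallest) monomial of `p` in the default diagonal term
order. -/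
def IsInitMon (p : MvPolynomial Cell ℤ) (m : Cell →₀ ℕ) : Prop :=
  m ∈ p.support ∧ ∀ m' ∈ p.support, m' = m ∨ monLt m m'
namespace StraightAux

open List

lemma lex_trans {u v w : List ℕ} (h1 : List.Lex (· < ·) u v) (h2 : List.Lex (· < ·) v w) :
    List.Lex (· < ·) u w := List.lt_trans h1 h2

lemma lexLe_iff_le {u v : List ℕ} : lexLe u v ↔ u ≤ v := by
  constructor
  · rintro (rfl | h)
    · exact le_refl u
    · exact le_of_lt (h : u < v)
  · intro h
    rcases eq_or_lt_of_le h with rfl | h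
    · exact Or.inl rfl
    · exact Or.inr (h : u < v)

lemma lexLe_trans {u v w : List ℕ} (h1 : lexLe u v) (h2 : lexLe v w) : lexLe u w := by
  rw [lexLe_iff_le] at *; exact le_trans h1 h2

lemma lexLe_of_lt {u v : List ℕ} (h : List.Lex (· < ·) u v) : lexLe u v := Or.inr h

lemma lexLe_lt_trans {u v w : List ℕ} (h1 : lexLe u v) (h2 : List.Lex (· < ·) v w) :
    List.Lex (· < ·) u w := by
  rcases h1 with rfl | h1
  · exact h2
  · exact lex_trans h1 h2

lemma lex_append {u v : List ℕ} (h : List.Lex (· < ·) u v) (hl : u.length = v.length)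
    (x y : List ℕ) : List.Lex (· < ·) (u ++ x) (v ++ y) := by
  induction u generalizing v with
  | nil => cases v with
    | nil => cases h
    | cons b t => simp at hl
  | cons a t ih =>
    cases v with
    | nil => simp at hl
    | cons b s =>
      cases h with
      | rel hab => exact List.Lex.rel hab
      | cons h' => exact List.Lex.cons (ih h' (by simpa using hl))

lemma lex_append_left (l : List ℕ) {u v : List ℕ} (h : List.Lex (· < ·) u v) :
    List.Lex (· < ·) (l ++ u) (l ++ v) := by
  induction l with
  | nil => simpa using h
  | cons a t ih => exact List.Lex.cons ih

/-- descending sort of a multiset -/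
def sortDesc (M : Multiset ℕ) : List ℕ := (M.sort (· ≤ ·)).reverse

lemma sortDesc_coe (M : Multiset ℕ) : (sortDesc M : Multiset ℕ) = M := by
  simp [sortDesc, Multiset.coe_reverse, Multiset.sort_eq]

lemma sortDesc_sorted (M : Multiset ℕ) : List.Pairwise (· ≥ ·) (sortDesc M) := by
  have := Multiset.pairwise_sort M (· ≤ ·)
  unfold sortDesc
  rw [List.pairwise_reverse]
  exact this

lemma sortDesc_length (M : Multiset ℕ) : (sortDesc M).length = Multiset.card M := by
  simp [sortDesc, Multiset.length_sort]

lemma cons_erase_of_mem {s : Multiset ℕ} {x h : ℕ} (hs : h ∈ s) :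
    (x ::ₘ s).erase h = x ::ₘ s.erase h := by
  by_cases hx : x = h
  · subst hx
    rw [Multiset.erase_cons_head, Multiset.cons_erase hs]
  · exact Multiset.erase_cons_tail s (by exact fun hh => hx hh)

lemma sorted_desc_lex {a b : ℕ} (hab : b < a) :
    ∀ (l₂ : List ℕ) (l₁ : List ℕ) (s : Multiset ℕ), l₁.Pairwise (· ≥ ·) → l₂.Pairwise (· ≥ ·) →
    (l₁ : Multiset ℕ) = b ::ₘ s → (l₂ : Multiset ℕ) = a ::ₘ s →
    List.Lex (· < ·) l₁ l₂ := by
  intro l₂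
  induction l₂ with
  | nil =>
    intro l₁ s _ _ _ m₂
    exfalso
    have : a ∈ (([] : List ℕ) : Multiset ℕ) := m₂ ▸ Multiset.mem_cons_self a s
    simp at this
  | cons h₂ t₂ ih =>
    intro l₁ s hs₁ hs₂ m₁ m₂
    cases l₁ with
    | nil =>
      exfalso
      have : b ∈ (([] : List ℕ) : Multiset ℕ) := m₁ ▸ Multiset.mem_cons_self b s
      simp at this
    | cons h₁ t₁ =>
      have ha_mem : a ∈ ((h₂ :: t₂ : List ℕ) : Multiset ℕ) := m₂ ▸ Multiset.mem_cons_self a s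
      have ha_le : a ≤ h₂ := by
        rcases List.mem_cons.1 (by exact_mod_cast ha_mem) with rfl | hmem
        · exact le_refl _
        · exact List.rel_of_pairwise_cons hs₂ hmem
      have hh₁_mem : h₁ ∈ (b ::ₘ s) := by
        rw [← m₁]; exact_mod_cast List.mem_cons_self (a := h₁) (l := t₁)
      rcases Multiset.mem_cons.1 hh₁_mem with rfl | hh₁s
      · -- h₁ = b < a ≤ h₂
        exact List.Lex.rel (lt_of_lt_of_le hab ha_le)
      · -- h₁ ∈ s
        have hh₁_mem₂ : h₁ ∈ ((h₂ :: t₂ : List ℕ) : Multiset ℕ) := by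
          rw [m₂]; exact Multiset.mem_cons_of_mem hh₁s
        have hh₁_le : h₁ ≤ h₂ := by
          rcases List.mem_cons.1 (by exact_mod_cast hh₁_mem₂) with rfl | hmem
          · exact le_refl _
          · exact List.rel_of_pairwise_cons hs₂ hmem
        rcases lt_or_eq_of_le hh₁_le with hlt | rfl
        · exact List.Lex.rel hlt
        · -- equal heads, recurse
          have ht₁ : (t₁ : Multiset ℕ) = b ::ₘ s.erase h₁ := by
            have : h₁ ::ₘ (t₁ : Multiset ℕ) = b ::ₘ s := by
              rw [← m₁]; rfl
            have h2 : ((h₁ ::ₘ (t₁ : Multiset ℕ)).erase h₁) = (b ::ₘ s).erase h₁ := by rw [this]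
            rwa [Multiset.erase_cons_head, cons_erase_of_mem hh₁s] at h2
          have ht₂ : (t₂ : Multiset ℕ) = a ::ₘ s.erase h₁ := by
            have : h₁ ::ₘ (t₂ : Multiset ℕ) = a ::ₘ s := by
              rw [← m₂]; rfl
            have h2 : ((h₁ ::ₘ (t₂ : Multiset ℕ)).erase h₁) = (a ::ₘ s).erase h₁ := by rw [this]
            rwa [Multiset.erase_cons_head, cons_erase_of_mem hh₁s] at h2
          exact List.Lex.cons (ih t₁ (s.erase h₁) hs₁.of_cons hs₂.of_cons ht₁ ht₂)

lemma sortDesc_lex {s : Multiset ℕ} {a b : ℕ} (hab : b < a) :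
    List.Lex (· < ·) (sortDesc (b ::ₘ s)) (sortDesc (a ::ₘ s)) :=
  sorted_desc_lex hab _ _ s (sortDesc_sorted _) (sortDesc_sorted _)
    (sortDesc_coe _) (sortDesc_coe _)

lemma flatMap_eq_blocks : ∀ (ks : List ℕ) (f g : ℕ → List ℕ),
    (∀ k ∈ ks, (f k).length = (g k).length) →
    ks.flatMap f = ks.flatMap g → ∀ k ∈ ks, f k = g k := by
  intro ks
  induction ks with
  | nil => intro f g _ _ k hk; simp at hk
  | cons k0 t ih =>
    intro f g hlen heq k hk
    rw [List.flatMap_cons, List.flatMap_cons] at heq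
    obtain ⟨h1, h2⟩ := List.append_inj heq (hlen k0 (List.mem_cons_self))
    rcases List.mem_cons.1 hk with rfl | hk'
    · exact h1
    · exact ih f g (fun k hk => hlen k (List.mem_cons_of_mem _ hk)) h2 k hk'

lemma flatMap_lex : ∀ (ks : List ℕ), ks.Pairwise (· < ·) → ∀ (f g : ℕ → List ℕ) (c : ℕ),
    c ∈ ks → (∀ k ∈ ks, k < c → f k = g k) → (f c).length = (g c).length →
    List.Lex (· < ·) (f c) (g c) →
    List.Lex (· < ·) (ks.flatMap f) (ks.flatMap g) := by
  intro ks
  induction ks with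
  | nil => intro _ f g c hc; simp at hc
  | cons k0 t ih =>
    intro hp f g c hc hbefore hlen hlex
    rw [List.flatMap_cons, List.flatMap_cons]
    rcases List.mem_cons.1 hc with rfl | hc'
    · exact lex_append hlex hlen _ _
    · have hk0c : k0 < c := (List.pairwise_cons.1 hp).1 c hc'
      rw [hbefore k0 (List.mem_cons_self) hk0c]
      exact lex_append_left _ (ih hp.of_cons f g c hc'
        (fun k hk => hbefore k (List.mem_cons_of_mem _ hk)) hlen hlex)

end StraightAux
namespace StraightAux

/-- entries of `V` in row `r` -/
def rowEntries (D : Finset Cell) (V : Cell → ℕ) (r : ℕ) : Multiset ℕ :=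
  (D.filter (fun c => c.1 = r)).val.map V

/-- `V` is obtained from `U` by rearranging entries within each row. -/
def rowEquiv (D : Finset Cell) (U V : Cell → ℕ) : Prop :=
  ∀ r, rowEntries D V r = rowEntries D U r

lemma mem_rowColsList {D : Finset Cell} {r c : ℕ} :
    c ∈ rowColsList D r ↔ (r, c) ∈ D := by
  unfold rowColsList
  rw [Multiset.mem_sort, Multiset.mem_map]
  constructor
  · rintro ⟨x, hx, rfl⟩
    have := Finset.mem_filter.1 (by exact hx)
    have hx1 : x = (r, x.2) := by
      ext <;> simp [this.2]
    rw [← hx1]; exact this.1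
  · intro h
    exact ⟨(r, c), Finset.mem_filter.2 ⟨h, rfl⟩, rfl⟩

lemma rowColsList_nodup (D : Finset Cell) (r : ℕ) : (rowColsList D r).Nodup := by
  unfold rowColsList
  rw [← Multiset.coe_nodup, Multiset.sort_eq]
  apply Multiset.Nodup.map_on
  · intro x hx y hy hxy
    have hx' := (Finset.mem_filter.1 (by exact hx)).2
    have hy' := (Finset.mem_filter.1 (by exact hy)).2
    ext
    · rw [hx', hy']
    · exact hxy
  · exact (D.filter _).nodup

lemma rowColsList_sorted (D : Finset Cell) (r : ℕ) :
    (rowColsList D r).Pairwise (· < ·) := by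
  have h1 : (rowColsList D r).Pairwise (· ≤ ·) := Multiset.pairwise_sort _ _
  have h2 := rowColsList_nodup D r
  exact List.Pairwise.imp₂ (fun a b hab hne => lt_of_le_of_ne hab hne) h1 h2

lemma rowcells_val (D : Finset Cell) (r : ℕ) :
    (D.filter (fun c => c.1 = r)).val = ((rowColsList D r : List ℕ) : Multiset ℕ).map (fun c => (r, c)) := by
  unfold rowColsList
  rw [Multiset.sort_eq, Multiset.map_map]
  symm
  calc (D.filter (fun c => c.1 = r)).val.map ((fun c => (r, c)) ∘ Prod.snd)
      = (D.filter (fun c => c.1 = r)).val.map id := by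
        apply Multiset.map_congr rfl
        intro x hx
        have := (Finset.mem_filter.1 (by exact hx)).2
        ext <;> simp [this]
    _ = _ := Multiset.map_id _

lemma rowEntries_eq (D : Finset Cell) (V : Cell → ℕ) (r : ℕ) :
    rowEntries D V r = (((rowColsList D r).map (fun c => V (r, c)) : List ℕ) : Multiset ℕ) := by
  unfold rowEntries
  rw [rowcells_val, Multiset.map_map]
  rfl

lemma diagMon_apply (D : Finset Cell) (V : Cell → ℕ) (a k : ℕ) :
    diagMon D V (a, k) = (D.filter (fun c => V c = a ∧ c.2 = k)).card := by
  unfold diagMon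
  rw [Finsupp.finset_sum_apply]
  rw [Finset.card_filter]
  apply Finset.sum_congr rfl
  intro c _
  rw [Finsupp.single_apply]
  congr 1
  simp [Prod.ext_iff, eq_comm, and_comm]

lemma colEntries_count (D : Finset Cell) (V : Cell → ℕ) (a k : ℕ) :
    (colEntries D V k).count a = (D.filter (fun c => V c = a ∧ c.2 = k)).card := by
  unfold colEntries
  rw [Multiset.count_map]
  rw [← Finset.filter_val, Finset.filter_filter, ← Finset.card_def]
  congr 1
  apply Finset.filter_congr
  intro c _
  exact ⟨fun ⟨h1, h2⟩ => ⟨h2.symm, h1⟩, fun ⟨h1, h2⟩ => ⟨h2, h1.symm⟩⟩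

lemma colEntries_eq_of_diagMon_eq {D : Finset Cell} {V W : Cell → ℕ}
    (h : diagMon D V = diagMon D W) (k : ℕ) : colEntries D V k = colEntries D W k := by
  ext a
  rw [colEntries_count, colEntries_count, ← diagMon_apply, ← diagMon_apply, h]

lemma colEntries_congr {D : Finset Cell} {V W : Cell → ℕ}
    (h : ∀ c ∈ D, V c = W c) (k : ℕ) : colEntries D V k = colEntries D W k := by
  unfold colEntries
  apply Multiset.map_congr rfl
  intro c hc
  exact h c (Finset.mem_filter.1 (by exact hc)).1

lemma modColWord_eq_flatMap (D : Finset Cell) (V : Cell → ℕ) :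
    modColWord D V = (List.range (D.sup Prod.snd + 1)).flatMap
      (fun k => sortDesc (colEntries D V k)) := rfl

lemma modColWord_congr {D : Finset Cell} {V W : Cell → ℕ}
    (h : ∀ c ∈ D, V c = W c) : modColWord D V = modColWord D W := by
  rw [modColWord_eq_flatMap, modColWord_eq_flatMap]
  have h2 : (fun k => sortDesc (colEntries D V k)) = (fun k => sortDesc (colEntries D W k)) := by
    funext k; rw [colEntries_congr h]
  rw [h2]

lemma colEntries_card (D : Finset Cell) (V : Cell → ℕ) (k : ℕ) :
    Multiset.card (colEntries D V k) = (D.filter (fun c => c.2 = k)).card := by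
  unfold colEntries
  rw [Multiset.card_map]
  rfl

end StraightAux
namespace StraightAux

lemma map_eq_map_pointwise {α β : Type*} {f g : α → β} : ∀ {l : List α},
    l.map f = l.map g → ∀ x ∈ l, f x = g x := by
  intro l
  induction l with
  | nil => intro _ x hx; simp at hx
  | cons a t ih =>
    intro h x hx
    simp only [List.map_cons, List.cons.injEq] at h
    rcases List.mem_cons.1 hx with rfl | hx2
    · exact h.1
    · exact ih h.2 x hx2

/-- number of within-row inversions of `V` -/
def invCount (D : Finset Cell) (V : Cell → ℕ) : ℕ :=
  ((D ×ˢ D).filter (fun z => z.1.1 = z.2.1 ∧ z.1.2 < z.2.2 ∧ V z.2 < V z.1)).card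

lemma eq_of_no_descent {D : Finset Cell} {U V : Cell → ℕ} (hU : RowStandard D U)
    (hrow : rowEquiv D U V)
    (hmono : ∀ x ∈ D, ∀ y ∈ D, x.1 = y.1 → x.2 < y.2 → V x ≤ V y) :
    ∀ c ∈ D, V c = U c := by
  rintro ⟨r, c2⟩ hc
  set L := rowColsList D r with hL
  have hmem : c2 ∈ L := mem_rowColsList.2 hc
  have hsortU : (L.map (fun c => U (r, c))).Pairwise (· < ·) := by
    rw [List.pairwise_map]
    refine (rowColsList_sorted D r).imp_of_mem ?_
    intro a b ha hb hab
    exact hU r a b (mem_rowColsList.1 ha) (mem_rowColsList.1 hb) hab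
  have hsortV : (L.map (fun c => V (r, c))).Pairwise (· ≤ ·) := by
    rw [List.pairwise_map]
    refine (rowColsList_sorted D r).imp_of_mem ?_
    intro a b ha hb hab
    exact hmono (r, a) (mem_rowColsList.1 ha) (r, b) (mem_rowColsList.1 hb) rfl hab
  have hperm : ((L.map (fun c => V (r, c)) : List ℕ) : Multiset ℕ)
      = ((L.map (fun c => U (r, c)) : List ℕ) : Multiset ℕ) := by
    rw [← rowEntries_eq, ← rowEntries_eq]
    exact hrow r
  have heq : L.map (fun c => V (r, c)) = L.map (fun c => U (r, c)) :=
    List.Perm.eq_of_pairwise' hsortV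
      (hsortU.imp le_of_lt) (Multiset.coe_eq_coe.1 hperm)
  exact map_eq_map_pointwise heq c2 hmem

lemma exists_adjacent_descent {D : Finset Cell} {V : Cell → ℕ} {x y : Cell}
    (hx : x ∈ D) (hy : y ∈ D) (hrowxy : x.1 = y.1) (hcol : x.2 < y.2) (hV : V y < V x) :
    ∃ r i, ∃ (h : i + 1 < (rowColsList D r).length),
      V (r, (rowColsList D r).get ⟨i + 1, h⟩) <
        V (r, (rowColsList D r).get ⟨i, Nat.lt_of_succ_lt h⟩) := by
  obtain ⟨r, x2⟩ := x
  obtain ⟨r', y2⟩ := y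
  simp only at hrowxy hcol hV
  subst hrowxy
  by_contra hadj
  push_neg at hadj
  have hchain : ((rowColsList D r).map (fun c => V (r, c))).IsChain (· ≤ ·) := by
    rw [List.isChain_iff_getElem]
    intro i hi
    rw [List.length_map] at hi
    have hi' : i + 1 < (rowColsList D r).length := by omega
    rw [List.getElem_map, List.getElem_map]
    exact hadj r i hi'
  have hpair' : (rowColsList D r).Pairwise (fun a b => V (r, a) ≤ V (r, b)) :=
    List.pairwise_map.1 (List.isChain_iff_pairwise.1 hchain)
  have hxm : x2 ∈ rowColsList D r := mem_rowColsList.2 hx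
  have hym : y2 ∈ rowColsList D r := mem_rowColsList.2 hy
  obtain ⟨ix, hix⟩ := List.mem_iff_get.1 hxm
  obtain ⟨iy, hiy⟩ := List.mem_iff_get.1 hym
  have hixy : ix < iy := by
    rcases lt_trichotomy ix iy with h | h | h
    · exact h
    · exfalso; rw [h, hiy] at hix; omega
    · exfalso
      have := (rowColsList_sorted D r).rel_get_of_lt h
      rw [hix, hiy] at this; omega
  have := List.pairwise_iff_get.1 hpair' ix iy hixy
  rw [hix, hiy] at this
  omega

section Swap

variable {D : Finset Cell} {V : Cell → ℕ} {r : ℕ} {p q : Cell}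

lemma swap_fst (hpq1 : p.1 = q.1) (x : Cell) : (Equiv.swap p q x).1 = x.1 := by
  by_cases hx : x = p
  · rw [hx, Equiv.swap_apply_left, ← hpq1]
  by_cases hx' : x = q
  · rw [hx', Equiv.swap_apply_right, hpq1]
  · rw [Equiv.swap_apply_of_ne_of_ne hx hx']

lemma swap_mem_D (hp : p ∈ D) (hq : q ∈ D) {x : Cell} (hx : x ∈ D) :
    Equiv.swap p q x ∈ D := by
  by_cases h1 : x = p
  · rw [h1, Equiv.swap_apply_left]; exact hq
  by_cases h2 : x = q
  · rw [h2, Equiv.swap_apply_right]; exact hp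
  · rw [Equiv.swap_apply_of_ne_of_ne h1 h2]; exact hx

lemma swap_rowEquiv (hp : p ∈ D) (hq : q ∈ D) (hpq1 : p.1 = q.1) :
    rowEquiv D V (fun x => V (Equiv.swap p q x)) := by
  intro r'
  unfold rowEntries
  have himg : (D.filter (fun c => c.1 = r')).image (Equiv.swap p q)
      = D.filter (fun c => c.1 = r') := by
    ext z
    simp only [Finset.mem_image, Finset.mem_filter]
    constructor
    · rintro ⟨w, ⟨hwD, hwr⟩, rfl⟩
      exact ⟨swap_mem_D hp hq hwD, by rw [swap_fst hpq1, hwr]⟩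
    · rintro ⟨hzD, hzr⟩
      refine ⟨Equiv.swap p q z, ⟨swap_mem_D hp hq hzD, by rw [swap_fst hpq1, hzr]⟩, ?_⟩
      simp
  have hval : (D.filter (fun c => c.1 = r')).val.map (Equiv.swap p q)
      = (D.filter (fun c => c.1 = r')).val := by
    rw [← Finset.image_val_of_injOn ((Equiv.swap p q).injective.injOn), himg]
  calc (D.filter (fun c => c.1 = r')).val.map (fun x => V (Equiv.swap p q x))
      = ((D.filter (fun c => c.1 = r')).val.map (Equiv.swap p q)).map V := by
        rw [Multiset.map_map]; rfl
    _ = (D.filter (fun c => c.1 = r')).val.map V := by rw [hval]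

lemma swap_colEntries_other (hp : p ∈ D) (hq : q ∈ D) {k : ℕ}
    (hk1 : k ≠ p.2) (hk2 : k ≠ q.2) :
    colEntries D (fun x => V (Equiv.swap p q x)) k = colEntries D V k := by
  unfold colEntries
  apply Multiset.map_congr rfl
  intro x hx
  have hx' : x ∈ D.filter (fun c => c.2 = k) := hx
  have hxk : x.2 = k := (Finset.mem_filter.1 hx').2
  have h1 : x ≠ p := fun h => hk1 (by rw [← hxk, h])
  have h2 : x ≠ q := fun h => hk2 (by rw [← hxk, h])
  rw [Equiv.swap_apply_of_ne_of_ne h1 h2]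

lemma swap_colEntries_self (hp : p ∈ D) (hq : q ∈ D) (hne : p.2 ≠ q.2) :
    ∃ M : Multiset ℕ,
      colEntries D V p.2 = V p ::ₘ M ∧
      colEntries D (fun x => V (Equiv.swap p q x)) p.2 = V q ::ₘ M := by
  set F := D.filter (fun c => c.2 = p.2) with hF
  have hpF : p ∈ F := Finset.mem_filter.2 ⟨hp, rfl⟩
  have hpFv : p ∈ F.val := hpF
  refine ⟨(F.val.erase p).map V, ?_, ?_⟩
  · unfold colEntries
    conv_lhs => rw [← Multiset.cons_erase hpFv]
    rw [Multiset.map_cons]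
  · unfold colEntries
    conv_lhs => rw [← Multiset.cons_erase hpFv]
    rw [Multiset.map_cons]
    congr 1
    · rw [Equiv.swap_apply_left]
    · apply Multiset.map_congr rfl
      intro x hx
      have hxF := (F.nodup.mem_erase_iff.1 hx)
      have h1 : x ≠ p := hxF.1
      have h2 : x ≠ q := by
        intro h
        have := (Finset.mem_filter.1 (by exact hxF.2)).2
        rw [h] at this
        exact hne this.symm
      rw [Equiv.swap_apply_of_ne_of_ne h1 h2]

end Swap

end StraightAux
namespace StraightAux

lemma swap_invCount_lt {D : Finset Cell} {V : Cell → ℕ} {p q : Cell}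
    (hp : p ∈ D) (hq : q ∈ D) (hpq1 : p.1 = q.1) (hpq2 : p.2 < q.2)
    (hVpq : V q < V p)
    (hadj : ∀ c : Cell, c ∈ D → c.1 = p.1 → p.2 < c.2 → c.2 < q.2 → False) :
    invCount D (fun x => V (Equiv.swap p q x)) < invCount D V := by
  classical
  have e_p : Equiv.swap p q p = q := Equiv.swap_apply_left p q
  have e_q : Equiv.swap p q q = p := Equiv.swap_apply_right p q
  set IV' := ((D ×ˢ D).filter (fun z => z.1.1 = z.2.1 ∧ z.1.2 < z.2.2 ∧
      V (Equiv.swap p q z.2) < V (Equiv.swap p q z.1))) with hIV'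
  set IV := ((D ×ˢ D).filter (fun z => z.1.1 = z.2.1 ∧ z.1.2 < z.2.2 ∧
      V z.2 < V z.1)) with hIV
  have hpqI : (p, q) ∈ IV := by
    rw [hIV, Finset.mem_filter, Finset.mem_product]
    exact ⟨⟨hp, hq⟩, hpq1, hpq2, hVpq⟩
  have hsub : IV'.image (Prod.map (Equiv.swap p q) (Equiv.swap p q)) ⊆ IV.erase (p, q) := by
    intro z hz
    obtain ⟨⟨x, y⟩, hxyI, rfl⟩ := Finset.mem_image.1 hz
    rw [hIV', Finset.mem_filter, Finset.mem_product] at hxyI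
    obtain ⟨⟨hx, hy⟩, hr, hc, hv⟩ := hxyI
    simp only at hr hc hv
    have hswx : Equiv.swap p q x ∈ D := swap_mem_D hp hq hx
    have hswy : Equiv.swap p q y ∈ D := swap_mem_D hp hq hy
    have hfst : (Equiv.swap p q x).1 = (Equiv.swap p q y).1 := by
      rw [swap_fst hpq1, swap_fst hpq1, hr]
    have hcol : (Equiv.swap p q x).2 < (Equiv.swap p q y).2 := by
      by_cases hxp : x = p
      · by_cases hyq : y = q
        · exfalso
          rw [hxp, hyq, e_p, e_q] at hv
          omega
        · have hyp : y ≠ p := by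
            intro h
            rw [hxp, h] at hc
            omega
          rw [hxp, e_p, Equiv.swap_apply_of_ne_of_ne hyp hyq]
          have hy1 : y.1 = p.1 := by rw [← hr, hxp]
          have hy2 : y.2 ≠ q.2 := by
            intro h
            exact hyq (Prod.ext (by rw [hy1, hpq1]) h)
          rw [hxp] at hc
          by_contra hle
          push_neg at hle
          exact hadj y hy hy1 hc (lt_of_le_of_ne hle hy2)
      · by_cases hxq : x = q
        · have hyq : y ≠ q := by
            intro h
            rw [hxq, h] at hc
            omega
          have hyp : y ≠ p := by
            intro h
            rw [hxq, h] at hc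
            omega
          rw [hxq, e_q, Equiv.swap_apply_of_ne_of_ne hyp hyq]
          rw [hxq] at hc
          omega
        · rw [Equiv.swap_apply_of_ne_of_ne hxp hxq]
          by_cases hyp : y = p
          · rw [hyp, e_p]
            rw [hyp] at hc
            omega
          · by_cases hyq : y = q
            · rw [hyq, e_q]
              have hx1 : x.1 = p.1 := by rw [hr, hyq, ← hpq1]
              have hx2 : x.2 ≠ p.2 := by
                intro h
                exact hxp (Prod.ext hx1 h)
              rw [hyq] at hc
              by_contra hle
              push_neg at hle
              exact hadj x hx hx1 (lt_of_le_of_ne hle (Ne.symm hx2)) hc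
            · rw [Equiv.swap_apply_of_ne_of_ne hyp hyq]
              exact hc
    refine Finset.mem_erase.2 ⟨?_, ?_⟩
    · intro h
      rw [Prod.mk.injEq] at h
      have ha : Equiv.swap p q x = p := h.1
      have hb : Equiv.swap p q y = q := h.2
      have hx' : x = q := by
        have h2 := congrArg (Equiv.swap p q) ha
        rwa [Equiv.swap_apply_self, e_p] at h2
      have hy' : y = p := by
        have h2 := congrArg (Equiv.swap p q) hb
        rwa [Equiv.swap_apply_self, e_q] at h2
      rw [hx', hy'] at hc
      omega
    · rw [hIV, Finset.mem_filter, Finset.mem_product]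
      exact ⟨⟨hswx, hswy⟩, hfst, hcol, hv⟩
  have hinj : Function.Injective (Prod.map (Equiv.swap p q) (Equiv.swap p q)) :=
    (Equiv.injective _).prodMap (Equiv.injective _)
  calc invCount D (fun x => V (Equiv.swap p q x)) = IV'.card := rfl
    _ = (IV'.image (Prod.map (Equiv.swap p q) (Equiv.swap p q))).card :=
        (Finset.card_image_of_injective _ hinj).symm
    _ ≤ (IV.erase (p, q)).card := Finset.card_le_card hsub
    _ < IV.card := by
        rw [Finset.card_erase_of_mem hpqI]
        have : 0 < IV.card := Finset.card_pos.2 ⟨_, hpqI⟩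
        omega

lemma rearrange_lex {D : Finset Cell} {U : Cell → ℕ} (hU : RowStandard D U) :
    ∀ (N : ℕ) (V : Cell → ℕ), invCount D V ≤ N → rowEquiv D U V →
    lexLe (modColWord D U) (modColWord D V) ∧
      ((∀ c ∈ D, V c = U c) ∨ lexLt (modColWord D U) (modColWord D V)) := by
  intro N
  induction N with
  | zero =>
    intro V hinv hrow
    have hmono : ∀ x ∈ D, ∀ y ∈ D, x.1 = y.1 → x.2 < y.2 → V x ≤ V y := by
      intro x hx y hy h1 h2
      by_contra hlt
      push_neg at hlt
      have : (x, y) ∈ ((D ×ˢ D).filter (fun z => z.1.1 = z.2.1 ∧ z.1.2 < z.2.2 ∧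
          V z.2 < V z.1)) := by
        rw [Finset.mem_filter, Finset.mem_product]
        exact ⟨⟨hx, hy⟩, h1, h2, hlt⟩
      have hc : 0 < invCount D V := Finset.card_pos.2 ⟨_, this⟩
      omega
    have heqUV := eq_of_no_descent hU hrow hmono
    have hmcw : modColWord D V = modColWord D U := modColWord_congr heqUV
    exact ⟨Or.inl hmcw.symm, Or.inl heqUV⟩
  | succ N ih =>
    intro V hinv hrow
    by_cases hmono : ∀ x ∈ D, ∀ y ∈ D, x.1 = y.1 → x.2 < y.2 → V x ≤ V y
    · have heqUV := eq_of_no_descent hU hrow hmono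
      have hmcw : modColWord D V = modColWord D U := modColWord_congr heqUV
      exact ⟨Or.inl hmcw.symm, Or.inl heqUV⟩
    · push_neg at hmono
      obtain ⟨x, hx, y, hy, hr1, hc1, hv1⟩ := hmono
      obtain ⟨r, i, hlen, hdesc⟩ := exists_adjacent_descent hx hy hr1 hc1 hv1
      set L := rowColsList D r with hL
      set c₁ := L.get ⟨i, Nat.lt_of_succ_lt hlen⟩ with hc₁
      set c₂ := L.get ⟨i + 1, hlen⟩ with hc₂
      set p : Cell := (r, c₁) with hp'
      set q : Cell := (r, c₂) with hq'
      have hp : p ∈ D := mem_rowColsList.1 (L.get_mem _)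
      have hq : q ∈ D := mem_rowColsList.1 (L.get_mem _)
      have hc12 : c₁ < c₂ := by
        have := (rowColsList_sorted D r).rel_get_of_lt
          (show (⟨i, Nat.lt_of_succ_lt hlen⟩ : Fin L.length) < ⟨i + 1, hlen⟩ by
            simp [Fin.lt_def])
        exact this
      have hadj : ∀ c : Cell, c ∈ D → c.1 = p.1 → p.2 < c.2 → c.2 < q.2 → False := by
        intro c hc hcr hcl hcu
        have hcr' : c.1 = r := hcr
        have hcl' : c₁ < c.2 := hcl
        have hcu' : c.2 < c₂ := hcu
        have hc2 : (r, c.2) ∈ D := by rw [← hcr']; exact hc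
        have hcm : c.2 ∈ L := mem_rowColsList.2 hc2
        obtain ⟨j, hj⟩ := List.mem_iff_get.1 hcm
        have hg1 : L.get ⟨i, Nat.lt_of_succ_lt hlen⟩ < L.get j := by rw [hj]; exact hcl'
        have hg2 : L.get j < L.get ⟨i + 1, hlen⟩ := by rw [hj]; exact hcu'
        have h1 : i < (j : ℕ) := by
          rcases lt_trichotomy (j : ℕ) i with hlt | heq | hgt
          · have := (rowColsList_sorted D r).rel_get_of_lt
              (show j < (⟨i, Nat.lt_of_succ_lt hlen⟩ : Fin L.length) from by
                rw [Fin.lt_def]; exact hlt)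
            exact absurd (this.trans hg1) (lt_irrefl _)
          · have heq2 : L.get j = L.get ⟨i, Nat.lt_of_succ_lt hlen⟩ := by
              congr 1
              exact Fin.ext heq
            rw [heq2] at hg1
            exact absurd hg1 (lt_irrefl _)
          · exact hgt
        have h2 : (j : ℕ) < i + 1 := by
          rcases lt_trichotomy (j : ℕ) (i + 1) with hlt | heq | hgt
          · exact hlt
          · have heq2 : L.get j = L.get ⟨i + 1, hlen⟩ := by
              congr 1
              exact Fin.ext heq
            rw [heq2] at hg2
            exact absurd hg2 (lt_irrefl _)
          · have := (rowColsList_sorted D r).rel_get_of_lt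
              (show (⟨i + 1, hlen⟩ : Fin L.length) < j from by
                rw [Fin.lt_def]; exact hgt)
            exact absurd (this.trans hg2) (lt_irrefl _)
        omega
      have hVpq : V q < V p := hdesc
      set V' := fun z => V (Equiv.swap p q z) with hV'
      have hrow' : rowEquiv D U V' := by
        intro r'
        rw [show rowEntries D V' r' = rowEntries D V r' from
          swap_rowEquiv hp hq rfl r', hrow r']
      have hinv' : invCount D V' ≤ N := by
        have h2 := swap_invCount_lt (V := V) hp hq rfl hc12 hVpq hadj
        have h3 : invCount D V' = invCount D (fun x => V (Equiv.swap p q x)) := rfl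
        omega
      obtain ⟨hle', _⟩ := ih V' hinv' hrow'
      -- modColWord V' < modColWord V
      obtain ⟨M, hMV, hMV'⟩ := swap_colEntries_self (V := V) hp hq (show p.2 ≠ q.2 from ne_of_lt hc12)
      have hlt : lexLt (modColWord D V') (modColWord D V) := by
        rw [modColWord_eq_flatMap, modColWord_eq_flatMap]
        apply flatMap_lex _ (List.pairwise_lt_range) _ _ c₁
        · rw [List.mem_range]
          have h5 : p.2 ≤ D.sup Prod.snd := Finset.le_sup hp
          have hpc : p.2 = c₁ := rfl
          omega
        · intro k hk hkc
          have hpc : p.2 = c₁ := rfl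
          have hqc : q.2 = c₂ := rfl
          have hk1 : k ≠ p.2 := by omega
          have hk2 : k ≠ q.2 := by omega
          rw [swap_colEntries_other hp hq hk1 hk2]
        · rw [show colEntries D V' c₁ = V q ::ₘ M from hMV',
            show colEntries D V c₁ = V p ::ₘ M from hMV]
          rw [sortDesc_length, sortDesc_length]
          simp
        · rw [show colEntries D V' c₁ = V q ::ₘ M from hMV',
            show colEntries D V c₁ = V p ::ₘ M from hMV]
          exact sortDesc_lex hVpq
      constructor
      · exact lexLe_of_lt (lexLe_lt_trans hle' hlt)
      · exact Or.inr (lexLe_lt_trans hle' hlt)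

end StraightAux
namespace StraightAux

open MvPolynomial

lemma finRange_coe_univ (n : ℕ) :
    ((List.finRange n : List (Fin n)) : Multiset (Fin n)) = (Finset.univ : Finset (Fin n)).val := by
  simp [Finset.univ, Fintype.elems]

lemma prod_X_eq {ι : Type*} (s : Finset ι) (v : ι → Cell) :
    ∏ t ∈ s, (MvPolynomial.X (v t) : MvPolynomial Cell ℤ)
      = MvPolynomial.monomial (∑ t ∈ s, Finsupp.single (v t) 1) 1 := by
  classical
  induction s using Finset.cons_induction with
  | empty => simp
  | cons a s ha ih =>
    rw [Finset.prod_cons, Finset.sum_cons, ih, MvPolynomial.X, MvPolynomial.monomial_mul, one_mul]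

/-- the monomial of row `r` given by entries `W` (identity column assignment) -/
noncomputable def rowMonF (D : Finset Cell) (W : Cell → ℕ) (r : ℕ) : Cell →₀ ℕ :=
  ∑ t : Fin (rowColsList D r).length,
    Finsupp.single (W (r, (rowColsList D r).get t), (rowColsList D r).get t) 1

/-- the monomial of row `r` given by the permutation `σ` -/
noncomputable def rowMonP (D : Finset Cell) (U : Cell → ℕ) (r : ℕ)
    (σ : Equiv.Perm (Fin (rowColsList D r).length)) : Cell →₀ ℕ :=
  ∑ t : Fin (rowColsList D r).length,
    Finsupp.single (U (r, (rowColsList D r).get (σ t)), (rowColsList D r).get t) 1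

lemma rowBracket_eq (D : Finset Cell) (U : Cell → ℕ) (r : ℕ) :
    rowBracket D U r = ∑ σ : Equiv.Perm (Fin (rowColsList D r).length),
      Equiv.Perm.sign σ • MvPolynomial.monomial (rowMonP D U r σ) (1 : ℤ) := by
  unfold rowBracket
  rw [Matrix.det_apply]
  apply Finset.sum_congr rfl
  intro σ _
  congr 1
  simp only [Matrix.of_apply]
  rw [prod_X_eq Finset.univ
    (fun t => (U (r, (rowColsList D r).get (σ t)), (rowColsList D r).get t))]
  rfl

lemma rowBracket_support {D : Finset Cell} {U : Cell → ℕ} {r : ℕ} {m : Cell →₀ ℕ}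
    (hm : m ∈ (rowBracket D U r).support) : ∃ σ, m = rowMonP D U r σ := by
  rw [rowBracket_eq] at hm
  obtain ⟨σ, -, hσ⟩ := Finset.mem_biUnion.1 (MvPolynomial.support_sum hm)
  have h2 := MvPolynomial.support_smul hσ
  rw [MvPolynomial.support_monomial] at h2
  simp only [one_ne_zero, if_false] at h2
  exact ⟨σ, Finset.mem_singleton.1 h2⟩

lemma support_prod_decomp {ι : Type*} [DecidableEq ι] (s : Finset ι)
    (p : ι → MvPolynomial Cell ℤ) :
    ∀ m ∈ (∏ i ∈ s, p i).support, ∃ f : ι → (Cell →₀ ℕ),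
      (∀ i ∈ s, f i ∈ (p i).support) ∧ m = ∑ i ∈ s, f i := by
  classical
  induction s using Finset.cons_induction with
  | empty =>
    intro m hm
    refine ⟨fun _ => 0, by simp, ?_⟩
    rw [Finset.prod_empty] at hm
    have := MvPolynomial.mem_support_iff.1 hm
    rw [MvPolynomial.coeff_one] at this
    simp only [Finset.sum_empty]
    by_contra hne
    exact this (by rw [if_neg (fun h => hne h.symm)])
  | cons a s ha ih =>
    intro m hm
    rw [Finset.prod_cons] at hm
    obtain ⟨x, hx, y, hy, hxy⟩ := Finset.mem_add.1 (MvPolynomial.support_mul _ _ hm)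
    obtain ⟨f, hf, rfl⟩ := ih y hy
    refine ⟨Function.update f a x, ?_, ?_⟩
    · intro i hi
      rcases Finset.mem_cons.1 hi with rfl | hi'
      · rwa [Function.update_self]
      · rw [Function.update_of_ne (by intro h; rw [h] at hi'; exact ha hi')]
        exact hf i hi'
    · have hupd : ∑ i ∈ s, Function.update f a x i = ∑ i ∈ s, f i := by
        apply Finset.sum_congr rfl
        intro i hi
        apply Function.update_of_ne
        intro h
        rw [h] at hi; exact ha hi
      rw [Finset.sum_cons, Function.update_self, hupd]
      exact hxy.symm

lemma sum_map_get {β : Type*} [AddCommMonoid β] (l : List ℕ) (g : ℕ → β) :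
    (l.map g).sum = ∑ t : Fin l.length, g (l.get t) := by
  conv_lhs => rw [← List.map_get_finRange l]
  rw [List.map_map, ← List.ofFn_eq_map, List.sum_ofFn]
  rfl

lemma sum_rowMonF (D : Finset Cell) (V : Cell → ℕ) :
    ∑ r ∈ D.image Prod.fst, rowMonF D V r = diagMon D V := by
  unfold diagMon
  rw [← Finset.sum_fiberwise_of_maps_to (g := Prod.fst)
    (fun c hc => Finset.mem_image_of_mem _ hc) (fun c => Finsupp.single (V c, c.2) 1)]
  apply Finset.sum_congr rfl
  intro r _
  rw [Finset.sum_eq_multiset_sum, rowcells_val, Multiset.map_map]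
  rw [show Multiset.map ((fun c => Finsupp.single (V c, c.2) (1:ℕ)) ∘ (fun c => (r, c)))
        ((rowColsList D r : List ℕ) : Multiset ℕ)
      = (((rowColsList D r).map (fun c => Finsupp.single ((V (r, c), c) : Cell) (1:ℕ))
          : List (Cell →₀ ℕ)) : Multiset (Cell →₀ ℕ)) from rfl]
  rw [Multiset.sum_coe, sum_map_get]
  rfl

end StraightAux
namespace StraightAux

open MvPolynomial

lemma map_perm_finRange {n : ℕ} (σ : Equiv.Perm (Fin n)) :
    Multiset.map σ ((List.finRange n : List (Fin n)) : Multiset (Fin n))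
      = ((List.finRange n : List (Fin n)) : Multiset (Fin n)) := by
  rw [finRange_coe_univ, ← Finset.image_val_of_injOn (σ.injective.injOn),
    Finset.image_univ_equiv]

lemma map_eq_map_get {α β : Type*} (l : List α) (f : α → β) :
    l.map f = (List.finRange l.length).map (fun t => f (l.get t)) := by
  conv_lhs => rw [← List.map_get_finRange l]
  rw [List.map_map]
  rfl

lemma rowMonP_decomp (D : Finset Cell) (U : Cell → ℕ) (r : ℕ)
    (σ : Equiv.Perm (Fin (rowColsList D r).length)) : ∃ w : ℕ → ℕ,
    (((rowColsList D r).map w : List ℕ) : Multiset ℕ)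
      = (((rowColsList D r).map (fun c => U (r, c)) : List ℕ) : Multiset ℕ) ∧
    rowMonP D U r σ = ∑ t : Fin (rowColsList D r).length,
      Finsupp.single (w ((rowColsList D r).get t), (rowColsList D r).get t) 1 := by
  classical
  have hnd := rowColsList_nodup D r
  refine ⟨fun c => if h : c ∈ rowColsList D r then
      U (r, (rowColsList D r).get
        (σ ⟨(rowColsList D r).idxOf c, List.idxOf_lt_length_iff.2 h⟩)) else 0, ?_, ?_⟩
  all_goals
    have hw : ∀ t : Fin (rowColsList D r).length,
        (fun c => if h : c ∈ rowColsList D r then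
          U (r, (rowColsList D r).get
            (σ ⟨(rowColsList D r).idxOf c, List.idxOf_lt_length_iff.2 h⟩)) else 0)
          ((rowColsList D r).get t) = U (r, (rowColsList D r).get (σ t)) := by
      intro t
      have hmem : (rowColsList D r).get t ∈ rowColsList D r := List.get_mem _ _
      simp only [dif_pos hmem]
      have heq : (⟨List.idxOf ((rowColsList D r).get t) (rowColsList D r),
          List.idxOf_lt_length_iff.2 hmem⟩ : Fin (rowColsList D r).length) = t := by
        apply Fin.ext
        exact List.get_idxOf hnd t
      rw [heq]
  · have h1 : (rowColsList D r).map (fun c => if h : c ∈ rowColsList D r then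
        U (r, (rowColsList D r).get
          (σ ⟨(rowColsList D r).idxOf c, List.idxOf_lt_length_iff.2 h⟩)) else 0)
        = (List.finRange (rowColsList D r).length).map
            (fun t => U (r, (rowColsList D r).get (σ t))) := by
      rw [map_eq_map_get]
      apply List.map_congr_left
      intro t _
      exact hw t
    have h2 : (rowColsList D r).map (fun c => U (r, c))
        = (List.finRange (rowColsList D r).length).map
            (fun t => U (r, (rowColsList D r).get t)) := by
      rw [map_eq_map_get]
    rw [h1, h2]
    rw [show ((List.map (fun t => U (r, (rowColsList D r).get (σ t)))
          (List.finRange (rowColsList D r).length) : List ℕ) : Multiset ℕ)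
        = Multiset.map (fun t => U (r, (rowColsList D r).get t))
            (Multiset.map σ ((List.finRange (rowColsList D r).length : List _) : Multiset _))
        from by rw [Multiset.map_map]; rfl]
    rw [map_perm_finRange]
    rfl
  · unfold rowMonP
    apply Finset.sum_congr rfl
    intro t _
    rw [hw t]

lemma family_decomp (D : Finset Cell) (U : Cell → ℕ) (f : ℕ → (Cell →₀ ℕ))
    (hf : ∀ r ∈ D.image Prod.fst, f r ∈ (rowBracket D U r).support) :
    ∃ V : Cell → ℕ, rowEquiv D U V ∧ (∀ r ∈ D.image Prod.fst, f r = rowMonF D V r) ∧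
      (∑ r ∈ D.image Prod.fst, f r) = diagMon D V := by
  classical
  have hch : ∀ r : ℕ, ∃ w : ℕ → ℕ,
      (((rowColsList D r).map w : List ℕ) : Multiset ℕ)
        = (((rowColsList D r).map (fun c => U (r, c)) : List ℕ) : Multiset ℕ) ∧
      (r ∈ D.image Prod.fst → f r = ∑ t : Fin (rowColsList D r).length,
        Finsupp.single (w ((rowColsList D r).get t), (rowColsList D r).get t) 1) := by
    intro r
    by_cases hr : r ∈ D.image Prod.fst
    · obtain ⟨σ, hσ⟩ := rowBracket_support (hf r hr)
      obtain ⟨w, hw1, hw2⟩ := rowMonP_decomp D U r σ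
      exact ⟨w, hw1, fun _ => by rw [hσ, hw2]⟩
    · exact ⟨fun c => U (r, c), rfl, fun h => absurd h hr⟩
  choose W hW1 hW2 using hch
  refine ⟨fun c => W c.1 c.2, ?_, ?_, ?_⟩
  · intro r
    rw [rowEntries_eq, rowEntries_eq]
    exact hW1 r
  · intro r hr
    rw [hW2 r hr]
    rfl
  · have : ∀ r ∈ D.image Prod.fst, f r = rowMonF D (fun c => W c.1 c.2) r := by
      intro r hr
      rw [hW2 r hr]
      rfl
    rw [Finset.sum_congr rfl this, sum_rowMonF]

lemma bracket_support {D : Finset Cell} {U : Cell → ℕ} {m : Cell →₀ ℕ}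
    (hm : m ∈ (bracket D U).support) :
    ∃ V : Cell → ℕ, rowEquiv D U V ∧ m = diagMon D V := by
  classical
  unfold bracket at hm
  obtain ⟨f, hf, rfl⟩ := support_prod_decomp _ _ m hm
  obtain ⟨V, h1, _, h3⟩ := family_decomp D U f hf
  exact ⟨V, h1, h3⟩

end StraightAux
namespace StraightAux

open MvPolynomial

lemma modColWord_eq_of_colEntries {D : Finset Cell} {V W : Cell → ℕ}
    (h : ∀ k, colEntries D V k = colEntries D W k) : modColWord D V = modColWord D W := by
  rw [modColWord_eq_flatMap, modColWord_eq_flatMap]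
  have h2 : (fun k => sortDesc (colEntries D V k)) = (fun k => sortDesc (colEntries D W k)) := by
    funext k; rw [h k]
  rw [h2]

lemma U_inj_on_row {D : Finset Cell} {U : Cell → ℕ} (hU : RowStandard D U) (r : ℕ)
    {c c' : ℕ} (hc : (r, c) ∈ D) (hc' : (r, c') ∈ D) (h : U (r, c) = U (r, c')) : c = c' := by
  rcases lt_trichotomy c c' with h1 | h1 | h1
  · have := hU r c c' hc hc' h1; omega
  · exact h1
  · have := hU r c' c hc' hc h1; omega

lemma rowMonP_self_ne_zero (D : Finset Cell) (U : Cell → ℕ) (r : ℕ)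
    (σ : Equiv.Perm (Fin (rowColsList D r).length)) (t : Fin (rowColsList D r).length) :
    rowMonP D U r σ (U (r, (rowColsList D r).get (σ t)), (rowColsList D r).get t) ≠ 0 := by
  unfold rowMonP
  rw [Finsupp.finset_sum_apply]
  intro h0
  have := Finset.sum_eq_zero_iff.1 h0 t (Finset.mem_univ t)
  rw [Finsupp.single_eq_same] at this
  exact one_ne_zero this

lemma rowMonP_apply_ne_zero {D : Finset Cell} {U : Cell → ℕ} {r : ℕ}
    {σ : Equiv.Perm (Fin (rowColsList D r).length)} {a k : ℕ}
    (h : rowMonP D U r σ (a, k) ≠ 0) :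
    ∃ t : Fin (rowColsList D r).length, k = (rowColsList D r).get t ∧
      a = U (r, (rowColsList D r).get (σ t)) := by
  unfold rowMonP at h
  rw [Finsupp.finset_sum_apply] at h
  by_contra hall
  push_neg at hall
  apply h
  apply Finset.sum_eq_zero
  intro t _
  rw [Finsupp.single_apply, if_neg]
  intro heq
  rw [Prod.mk.injEq] at heq
  exact (hall t heq.2.symm) heq.1.symm

lemma rowMonP_inj {D : Finset Cell} {U : Cell → ℕ} (hU : RowStandard D U) {r : ℕ}
    {σ τ : Equiv.Perm (Fin (rowColsList D r).length)}
    (h : rowMonP D U r σ = rowMonP D U r τ) : σ = τ := by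
  have hnd := rowColsList_nodup D r
  have hgetinj := List.nodup_iff_injective_get.1 hnd
  apply Equiv.ext
  intro t
  have h1 := rowMonP_self_ne_zero D U r σ t
  rw [h] at h1
  obtain ⟨t', hk, ha⟩ := rowMonP_apply_ne_zero h1
  have ht' : t' = t := hgetinj hk.symm
  subst ht'
  have hmem1 : (r, (rowColsList D r).get (σ t')) ∈ D :=
    mem_rowColsList.1 (List.get_mem _ _)
  have hmem2 : (r, (rowColsList D r).get (τ t')) ∈ D :=
    mem_rowColsList.1 (List.get_mem _ _)
  have := U_inj_on_row hU r hmem1 hmem2 ha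
  exact hgetinj this

lemma rowMonF_eq_rowMonP_one (D : Finset Cell) (U : Cell → ℕ) (r : ℕ) :
    rowMonF D U r = rowMonP D U r 1 := rfl

lemma coeff_rowMonF_rowBracket {D : Finset Cell} {U : Cell → ℕ} (hU : RowStandard D U)
    (r : ℕ) : MvPolynomial.coeff (rowMonF D U r) (rowBracket D U r) = 1 := by
  classical
  rw [rowBracket_eq, MvPolynomial.coeff_sum]
  rw [Finset.sum_eq_single (1 : Equiv.Perm (Fin (rowColsList D r).length))]
  · rw [MvPolynomial.coeff_smul, MvPolynomial.coeff_monomial,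
      if_pos (rowMonF_eq_rowMonP_one D U r).symm]
    simp
  · intro σ _ hσ
    rw [MvPolynomial.coeff_smul, MvPolynomial.coeff_monomial, if_neg, smul_zero]
    intro heq
    exact hσ (rowMonP_inj hU (by rw [heq, rowMonF_eq_rowMonP_one]))
  · intro h
    exact absurd (Finset.mem_univ _) h

lemma coeff_prod_unique {ι : Type*} [DecidableEq ι] (s : Finset ι)
    (p : ι → MvPolynomial Cell ℤ) (g : ι → (Cell →₀ ℕ))
    (huniq : ∀ f : ι → (Cell →₀ ℕ), (∀ i ∈ s, f i ∈ (p i).support) →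
      ∑ i ∈ s, f i = ∑ i ∈ s, g i → ∀ i ∈ s, f i = g i) :
    MvPolynomial.coeff (∑ i ∈ s, g i) (∏ i ∈ s, p i)
      = ∏ i ∈ s, MvPolynomial.coeff (g i) (p i) := by
  classical
  induction s using Finset.cons_induction with
  | empty => simp [MvPolynomial.coeff_one]
  | cons a s ha ih =>
    rw [Finset.sum_cons, Finset.prod_cons, Finset.prod_cons]
    by_cases hga : g a ∈ (p a).support
    · have huniq_s : ∀ f : ι → (Cell →₀ ℕ), (∀ i ∈ s, f i ∈ (p i).support) →
          ∑ i ∈ s, f i = ∑ i ∈ s, g i → ∀ i ∈ s, f i = g i := by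
        intro f hfs hsum i hi
        have hFmem : ∀ j ∈ Finset.cons a s ha, (Function.update f a (g a)) j ∈ (p j).support := by
          intro j hj
          rcases Finset.mem_cons.1 hj with rfl | hj'
          · rwa [Function.update_self]
          · rw [Function.update_of_ne (by intro hh; rw [hh] at hj'; exact ha hj')]
            exact hfs j hj'
        have hupd : ∑ j ∈ s, (Function.update f a (g a)) j = ∑ j ∈ s, f j := by
          apply Finset.sum_congr rfl
          intro j hj
          apply Function.update_of_ne
          intro hh; rw [hh] at hj; exact ha hj
        have hsum' : ∑ j ∈ Finset.cons a s ha, (Function.update f a (g a)) j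
            = ∑ j ∈ Finset.cons a s ha, g j := by
          rw [Finset.sum_cons, Finset.sum_cons, Function.update_self, hupd, hsum]
        have h2 := huniq _ hFmem hsum' i (Finset.mem_cons.2 (Or.inr hi))
        rwa [Function.update_of_ne (by intro hh; rw [hh] at hi; exact ha hi)] at h2
      rw [← ih huniq_s]
      rw [MvPolynomial.coeff_mul]
      apply Finset.sum_eq_single_of_mem ((g a, ∑ i ∈ s, g i) : (Cell →₀ ℕ) × (Cell →₀ ℕ))
        (Finset.HasAntidiagonal.mem_antidiagonal.2 rfl)
      rintro ⟨x, y⟩ hxy hne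
      rw [Finset.HasAntidiagonal.mem_antidiagonal] at hxy
      by_contra hprod
      have hxne : MvPolynomial.coeff x (p a) ≠ 0 := fun h => hprod (by rw [h, zero_mul])
      have hyne : MvPolynomial.coeff y (∏ i ∈ s, p i) ≠ 0 :=
        fun h => hprod (by rw [h, mul_zero])
      obtain ⟨f, hfs, rfl⟩ := support_prod_decomp s p y (MvPolynomial.mem_support_iff.2 hyne)
      have hFmem : ∀ j ∈ Finset.cons a s ha, (Function.update f a x) j ∈ (p j).support := by
        intro j hj
        rcases Finset.mem_cons.1 hj with rfl | hj'
        · rw [Function.update_self]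
          exact MvPolynomial.mem_support_iff.2 hxne
        · rw [Function.update_of_ne (by intro hh; rw [hh] at hj'; exact ha hj')]
          exact hfs j hj'
      have hupd : ∑ j ∈ s, (Function.update f a x) j = ∑ j ∈ s, f j := by
        apply Finset.sum_congr rfl
        intro j hj
        apply Function.update_of_ne
        intro hh; rw [hh] at hj; exact ha hj
      have hFsum : ∑ j ∈ Finset.cons a s ha, (Function.update f a x) j
          = ∑ j ∈ Finset.cons a s ha, g j := by
        rw [Finset.sum_cons, Finset.sum_cons, Function.update_self, hupd]
        exact hxy
      have h1 := huniq _ hFmem hFsum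
      have hxa : x = g a := by
        have := h1 a (Finset.mem_cons_self a s)
        rwa [Function.update_self] at this
      have hyg : ∑ i ∈ s, f i = ∑ i ∈ s, g i := by
        apply Finset.sum_congr rfl
        intro j hj
        have := h1 j (Finset.mem_cons.2 (Or.inr hj))
        rwa [Function.update_of_ne (by intro hh; rw [hh] at hj; exact ha hj)] at this
      apply hne
      rw [hxa, hyg]
    · have h0 : MvPolynomial.coeff (g a) (p a) = 0 := MvPolynomial.notMem_support_iff.1 hga
      rw [h0, zero_mul]
      by_contra hne
      have hmem := MvPolynomial.mem_support_iff.2 hne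
      obtain ⟨x, hx, y, hy, hxy⟩ := Finset.mem_add.1 (MvPolynomial.support_mul _ _ hmem)
      obtain ⟨f, hfs, rfl⟩ := support_prod_decomp s p y hy
      have hFmem : ∀ j ∈ Finset.cons a s ha, (Function.update f a x) j ∈ (p j).support := by
        intro j hj
        rcases Finset.mem_cons.1 hj with rfl | hj'
        · rwa [Function.update_self]
        · rw [Function.update_of_ne (by intro hh; rw [hh] at hj'; exact ha hj')]
          exact hfs j hj'
      have hupd : ∑ j ∈ s, (Function.update f a x) j = ∑ j ∈ s, f j := by
        apply Finset.sum_congr rfl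
        intro j hj
        apply Function.update_of_ne
        intro hh; rw [hh] at hj; exact ha hj
      have hFsum : ∑ j ∈ Finset.cons a s ha, (Function.update f a x) j
          = ∑ j ∈ Finset.cons a s ha, g j := by
        rw [Finset.sum_cons, Finset.sum_cons, Function.update_self, hupd]
        exact hxy
      have h1 := huniq _ hFmem hFsum a (Finset.mem_cons_self a s)
      rw [Function.update_self] at h1
      rw [h1] at hx
      exact hga hx

lemma diag_unique (D : Finset Cell) (U : Cell → ℕ) (hU : RowStandard D U) :
    ∀ f : ℕ → (Cell →₀ ℕ), (∀ r ∈ D.image Prod.fst, f r ∈ (rowBracket D U r).support) →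
    ∑ r ∈ D.image Prod.fst, f r = ∑ r ∈ D.image Prod.fst, rowMonF D U r →
    ∀ r ∈ D.image Prod.fst, f r = rowMonF D U r := by
  intro f hf hsum r hr
  obtain ⟨V, hVrow, hVf, hVdiag⟩ := family_decomp D U f hf
  have hdd : diagMon D V = diagMon D U := by rw [← hVdiag, hsum, sum_rowMonF]
  have hmcw : modColWord D V = modColWord D U :=
    modColWord_eq_of_colEntries (fun k => colEntries_eq_of_diagMon_eq hdd k)
  have hVU : ∀ c ∈ D, V c = U c := by
    rcases (rearrange_lex hU (invCount D V) V le_rfl hVrow).2 with h | h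
    · exact h
    · exfalso
      rw [hmcw] at h
      exact lt_irrefl (modColWord D U) (show modColWord D U < modColWord D U from h)
  rw [hVf r hr]
  unfold rowMonF
  apply Finset.sum_congr rfl
  intro t _
  rw [hVU (r, (rowColsList D r).get t) (mem_rowColsList.1 (List.get_mem _ _))]

lemma coeff_diag_bracket (D : Finset Cell) (U : Cell → ℕ) (hU : RowStandard D U) :
    MvPolynomial.coeff (diagMon D U) (bracket D U) = 1 := by
  classical
  rw [← sum_rowMonF D U]
  unfold bracket
  rw [coeff_prod_unique _ _ _ (diag_unique D U hU)]
  rw [Finset.prod_congr rfl (fun r _ => coeff_rowMonF_rowBracket hU r), Finset.prod_const_one]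

end StraightAux
namespace StraightAux

lemma unique_assignment : ∀ (n : ℕ) (R : Finset ℕ) (L f g : ℕ → ℕ), R.card = n →
    (∀ i ∈ R, L i ≤ f i) → (∀ i ∈ R, L i ≤ g i) →
    (∀ i ∈ R, ∀ j ∈ R, i < j → L i ≤ f j → f i ≤ f j) →
    (∀ i ∈ R, ∀ j ∈ R, i < j → L i ≤ g j → g i ≤ g j) →
    R.val.map f = R.val.map g → ∀ i ∈ R, f i = g i := by
  intro n
  induction n with
  | zero =>
    intro R L f g hcard _ _ _ _ _ i hi
    rw [Finset.card_eq_zero] at hcard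
    rw [hcard] at hi
    simp at hi
  | succ n ih =>
    intro R L f g hcard hLf hLg hf hg hmap i hi
    have hne : R.Nonempty := ⟨i, hi⟩
    set r := R.min' hne with hr
    have hrR : r ∈ R := R.min'_mem hne
    have hfg : f r = g r := by
      have h1 : ¬ f r < g r := by
        intro hlt
        have hmem : f r ∈ R.val.map g := by
          rw [← hmap]
          exact Multiset.mem_map_of_mem f hrR
        obtain ⟨j, hjR, hj⟩ := Multiset.mem_map.1 hmem
        have hjR' : j ∈ R := hjR
        rcases eq_or_ne j r with rfl | hjr
        · omega
        · have hrj : r < j := lt_of_le_of_ne (R.min'_le j hjR') (Ne.symm hjr)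
          have := hg r hrR j hjR' hrj (by rw [hj]; exact hLf r hrR)
          omega
      have h2 : ¬ g r < f r := by
        intro hlt
        have hmem : g r ∈ R.val.map f := by
          rw [hmap]
          exact Multiset.mem_map_of_mem g hrR
        obtain ⟨j, hjR, hj⟩ := Multiset.mem_map.1 hmem
        have hjR' : j ∈ R := hjR
        rcases eq_or_ne j r with rfl | hjr
        · omega
        · have hrj : r < j := lt_of_le_of_ne (R.min'_le j hjR') (Ne.symm hjr)
          have := hf r hrR j hjR' hrj (by rw [hj]; exact hLg r hrR)
          omega
      omega
    rcases eq_or_ne i r with rfl | hir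
    · exact hfg
    · have hcard' : (R.erase r).card = n := by
        rw [Finset.card_erase_of_mem hrR]
        omega
      have hmap' : (R.erase r).val.map f = (R.erase r).val.map g := by
        have hv : R.val = r ::ₘ (R.erase r).val := by
          rw [Finset.erase_val]
          exact (Multiset.cons_erase hrR).symm
        have := hmap
        rw [hv, Multiset.map_cons, Multiset.map_cons, hfg] at this
        exact (Multiset.cons_inj_right _).1 this
      refine ih (R.erase r) L f g hcard'
        (fun a ha => hLf a (Finset.mem_of_mem_erase ha))
        (fun a ha => hLg a (Finset.mem_of_mem_erase ha))
        (fun a ha b hb hab h => hf a (Finset.mem_of_mem_erase ha) b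
          (Finset.mem_of_mem_erase hb) hab h)
        (fun a ha b hb hab h => hg a (Finset.mem_of_mem_erase ha) b
          (Finset.mem_of_mem_erase hb) hab h)
        hmap' i (Finset.mem_erase.2 ⟨hir, hi⟩)

lemma straight_unique (D : Finset Cell) {S S' : Cell → ℕ}
    (h1 : Straight D S) (h2 : Straight D S')
    (hcol : ∀ k, colEntries D S k = colEntries D S' k) :
    ∀ c ∈ D, S c = S' c := by
  classical
  have main : ∀ k : ℕ, ∀ r : ℕ, (r, k) ∈ D → S (r, k) = S' (r, k) := by
    intro k
    induction k using Nat.strong_induction_on with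
    | _ k ihk =>
      intro r hr
      set R := (D.filter (fun c => c.2 = k)).image Prod.fst with hR
      set L : ℕ → ℕ := fun i =>
        if k = 0 then 0 else if (i, k - 1) ∈ D then S (i, k - 1) + 1 else 0 with hLdef
      have hmemR : ∀ i, i ∈ R ↔ (i, k) ∈ D := by
        intro i
        rw [hR]
        constructor
        · intro h
          obtain ⟨c, hc, rfl⟩ := Finset.mem_image.1 h
          obtain ⟨hcD, hck⟩ := Finset.mem_filter.1 hc
          have : c = (c.1, k) := by
            ext
            · rfl
            · exact hck
          rwa [this] at hcD
        · intro h
          exact Finset.mem_image.2 ⟨(i, k), Finset.mem_filter.2 ⟨h, rfl⟩, rfl⟩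
      have hinj : Set.InjOn (Prod.fst : Cell → ℕ) (((D.filter (fun c => c.2 = k)) : Finset Cell) : Set Cell) := by
        intro x hx y hy hxy
        have hx2 : x.2 = k := (Finset.mem_filter.1 (Finset.mem_coe.1 hx)).2
        have hy2 : y.2 = k := (Finset.mem_filter.1 (Finset.mem_coe.1 hy)).2
        ext
        · exact hxy
        · rw [hx2, hy2]
      have hmapgen : ∀ W : Cell → ℕ, R.val.map (fun i => W (i, k)) = colEntries D W k := by
        intro W
        rw [hR, Finset.image_val_of_injOn hinj, Multiset.map_map]
        unfold colEntries
        apply Multiset.map_congr rfl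
        intro c hc
        have hck : c.2 = k := by
          have hc' : c ∈ D.filter (fun c => c.2 = k) := hc
          exact (Finset.mem_filter.1 hc').2
        show W (c.1, k) = W c
        rw [← hck]
      have hmap : R.val.map (fun i => S (i, k)) = R.val.map (fun i => S' (i, k)) := by
        rw [hmapgen S, hmapgen S', hcol k]
      -- conditions
      have hLf : ∀ i ∈ R, L i ≤ S (i, k) := by
        intro i hiR
        have hik : (i, k) ∈ D := (hmemR i).1 hiR
        rw [hLdef]
        by_cases hk0 : k = 0
        · simp [hk0]
        · simp only [if_neg hk0]
          by_cases hprev : (i, k - 1) ∈ D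
          · simp only [if_pos hprev]
            have := h1.1 i (k - 1) k hprev hik (by omega)
            omega
          · simp [hprev]
      have hLg : ∀ i ∈ R, L i ≤ S' (i, k) := by
        intro i hiR
        have hik : (i, k) ∈ D := (hmemR i).1 hiR
        rw [hLdef]
        by_cases hk0 : k = 0
        · simp [hk0]
        · simp only [if_neg hk0]
          by_cases hprev : (i, k - 1) ∈ D
          · simp only [if_pos hprev]
            have hSS' : S (i, k - 1) = S' (i, k - 1) := ihk (k - 1) (by omega) i hprev
            have := h2.1 i (k - 1) k hprev hik (by omega)
            omega
          · simp [hprev]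
      have hbf : ∀ i ∈ R, ∀ j ∈ R, i < j → L i ≤ S (j, k) → S (i, k) ≤ S (j, k) := by
        intro i hiR j hjR hij hLij
        by_contra hlt
        push_neg at hlt
        obtain ⟨hk1, hmem, hlt2⟩ := h1.2 i j k ((hmemR i).1 hiR) ((hmemR j).1 hjR) hij hlt
        have hk0 : ¬ k = 0 := by omega
        rw [hLdef] at hLij
        simp only [if_neg hk0, if_pos hmem] at hLij
        omega
      have hbg : ∀ i ∈ R, ∀ j ∈ R, i < j → L i ≤ S' (j, k) → S' (i, k) ≤ S' (j, k) := by
        intro i hiR j hjR hij hLij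
        by_contra hlt
        push_neg at hlt
        obtain ⟨hk1, hmem, hlt2⟩ := h2.2 i j k ((hmemR i).1 hiR) ((hmemR j).1 hjR) hij hlt
        have hk0 : ¬ k = 0 := by omega
        have hSS' : S (i, k - 1) = S' (i, k - 1) := ihk (k - 1) (by omega) i hmem
        rw [hLdef] at hLij
        simp only [if_neg hk0, if_pos hmem] at hLij
        omega
      exact unique_assignment R.card R L (fun i => S (i, k)) (fun i => S' (i, k)) rfl
        hLf hLg hbf hbg hmap r ((hmemR r).2 hr)
  rintro ⟨r, k⟩ h
  exact main k r h

end StraightAux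
open StraightAux in
/-- If `p = Σ αᵢ [Tᵢ]` with the `Tᵢ` row-standard of row-convex shape `D`, and
also `p = Σ βⱼ [Sⱼ]` with the `Sⱼ` distinct straight tableaux of shape `D` and
all `βⱼ ≠ 0`, then the lexicographically smallest modified column word among
the `Sⱼ` is at least as large as the smallest modified column word among the
`Tᵢ`: some `Tᵢ` has modified column word lexicographically ≤ all of them. -/
theorem min_modColWord_of_straight_expansion
    (D : Finset Cell) (hD : RowConvex D)
    (m n : ℕ) (hm : 0 < m) (hn : 0 < n)
    (α : Fin m → ℤ) (T : Fin m → Cell → ℕ)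
    (β : Fin n → ℤ) (S : Fin n → Cell → ℕ)
    (hT : ∀ i, RowStandard D (T i))
    (hS : ∀ j, Straight D (S j))
    (hβ : ∀ j, β j ≠ 0)
    (hdist : ∀ j j' : Fin n, j ≠ j' → ∃ c ∈ D, S j c ≠ S j' c)
    (heq : ∑ i, α i • bracket D (T i) = ∑ j, β j • bracket D (S j)) :
    ∃ i : Fin m, ∀ j : Fin n,
      lexLe (modColWord D (T i)) (modColWord D (S j)) := by
  classical
  obtain ⟨j0, -, hj0⟩ := Finset.exists_min_image (Finset.univ : Finset (Fin n))
    (fun j => modColWord D (S j)) ⟨⟨0, hn⟩, Finset.mem_univ _⟩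
  have hcoeffj : ∀ j : Fin n, j ≠ j0 →
      MvPolynomial.coeff (diagMon D (S j0)) (bracket D (S j)) = 0 := by
    intro j hj
    by_contra hne
    obtain ⟨V, hVrow, hVdiag⟩ := bracket_support (MvPolynomial.mem_support_iff.2 hne)
    have hmcwV : modColWord D V = modColWord D (S j0) :=
      (modColWord_eq_of_colEntries
        (fun k => colEntries_eq_of_diagMon_eq hVdiag k)).symm
    have hmin : modColWord D (S j0) ≤ modColWord D (S j) := hj0 j (Finset.mem_univ j)
    obtain ⟨hle, hstrict⟩ := rearrange_lex (hS j).1 (invCount D V) V le_rfl hVrow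
    have hle' : modColWord D (S j) ≤ modColWord D (S j0) := by
      rw [← hmcwV]
      exact lexLe_iff_le.1 hle
    have heqw : modColWord D (S j) = modColWord D (S j0) := le_antisymm hle' hmin
    rcases hstrict with hVS | hlt
    · have h5 : diagMon D V = diagMon D (S j) := by
        unfold diagMon
        exact Finset.sum_congr rfl (fun c hc => by rw [hVS c hc])
      have hdm : diagMon D (S j) = diagMon D (S j0) := (hVdiag.trans h5).symm
      have hall := straight_unique D (hS j) (hS j0)
        (fun k => colEntries_eq_of_diagMon_eq hdm k)
      obtain ⟨c, hc, hne'⟩ := hdist j j0 hj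
      exact hne' (hall c hc)
    · rw [hmcwV, ← heqw] at hlt
      exact lt_irrefl _ (show modColWord D (S j) < modColWord D (S j) from hlt)
  have hcoefftot : MvPolynomial.coeff (diagMon D (S j0))
      (∑ j, β j • bracket D (S j)) = β j0 := by
    rw [MvPolynomial.coeff_sum]
    rw [Finset.sum_eq_single j0]
    · rw [MvPolynomial.coeff_smul, coeff_diag_bracket D (S j0) (hS j0).1]
      simp
    · intro j _ hj
      rw [MvPolynomial.coeff_smul, hcoeffj j hj, smul_zero]
    · intro h
      exact absurd (Finset.mem_univ _) h
  have hsupp : diagMon D (S j0) ∈ (∑ i, α i • bracket D (T i)).support := by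
    rw [heq]
    exact MvPolynomial.mem_support_iff.2 (by rw [hcoefftot]; exact hβ j0)
  have hcoeffT : ∃ i : Fin m, MvPolynomial.coeff (diagMon D (S j0)) (bracket D (T i)) ≠ 0 := by
    by_contra hall
    push_neg at hall
    apply MvPolynomial.mem_support_iff.1 hsupp
    rw [MvPolynomial.coeff_sum]
    apply Finset.sum_eq_zero
    intro i _
    rw [MvPolynomial.coeff_smul, hall i, smul_zero]
  obtain ⟨i, hi⟩ := hcoeffT
  refine ⟨i, ?_⟩
  obtain ⟨V, hVrow, hVdiag⟩ := bracket_support (MvPolynomial.mem_support_iff.2 hi)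
  have hmcwV : modColWord D V = modColWord D (S j0) :=
    (modColWord_eq_of_colEntries (fun k => colEntries_eq_of_diagMon_eq hVdiag k)).symm
  have hle := (rearrange_lex (hT i) (invCount D V) V le_rfl hVrow).1
  intro j
  apply lexLe_trans (v := modColWord D (S j0))
  · rw [← hmcwV]
    exact hle
  · exact lexLe_iff_le.2 (hj0 j (Finset.mem_univ j))
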